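/- In a finite argumentation framework, if the defeat relation is symmetric (every defeat is mutual), then every preferred extension is stable. -/

import Mathlib

section AF
variable {A : Type}

def conflictFree (D : A → A → Prop) (E : Set A) : Prop :=
  ∀ a ∈ E, ∀ b ∈ E, ¬ D a b

def acceptable (D : A → A → Prop) (E : Set A) (a : A) : Prop :=
  ∀ b, D b a → ∃ c ∈ E, D c b

def admissible (D : A → A → Prop) (E : Set A) : Prop :=
  conflictFree D E ∧ ∀ a ∈ E, acceptable D E a

def complete (D : A → A → Prop) (E : Set A) : Prop :=
  admissible D E ∧ ∀ a, acceptable D E a → a ∈ E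

def preferred (D : A → A → Prop) (E : Set A) : Prop :=
  complete D E ∧ ∀ E', complete D E' → E ⊆ E' → E = E'

def stable (D : A → A → Prop) (E : Set A) : Prop :=
  conflictFree D E ∧ ∀ b, b ∉ E → ∃ a ∈ E, D a b

/-- Characteristic function of an abstract argumentation framework. -/
def charFA (D : A → A → Prop) (E : Set A) : Set A :=
  {a | ∀ b, D b a → ∃ c ∈ E, D c b}

/-- Grounded extension: least fixed point of the characteristic function. -/
def groundedA (D : A → A → Prop) : Set A :=
  sInf {E | charFA D E ⊆ E}

end AF

/-- In a finite argumentation framework with a symmetric and irreflexive defeat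
relation, every preferred extension is stable. -/
lemma admissible_insert {A : Type} {D : A → A → Prop}
    (hsymm : ∀ a b, D a b → D b a) (hirr : ∀ a, ¬ D a a)
    {T : Set A} (hT : admissible D T) {a : A} (ha : acceptable D T a) :
    admissible D (insert a T) := by
  obtain ⟨hcf, hacc⟩ := hT
  constructor
  · rintro x (rfl | hx) y (rfl | hy)
    · exact hirr _
    · intro hxy
      obtain ⟨c, hc, hcy⟩ := ha y (hsymm _ _ hxy)
      exact hcf c hc y hy hcy
    · intro hxy
      obtain ⟨c, hc, hcx⟩ := ha x hxy
      exact hcf c hc x hx hcx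
    · exact hcf x hx y hy
  · rintro z (rfl | hz) b hb
    · obtain ⟨c, hc, hcb⟩ := ha b hb
      exact ⟨c, Or.inr hc, hcb⟩
    · obtain ⟨c, hc, hcb⟩ := hacc z hz b hb
      exact ⟨c, Or.inr hc, hcb⟩

theorem preferred_is_stable_of_symmetric {A : Type} [Fintype A]
    (D : A → A → Prop) (hsymm : ∀ a b, D a b → D b a) (hirr : ∀ a, ¬ D a a) :
    ∀ E : Set A, preferred D E → stable D E := by
  intro E ⟨⟨hEadm, hEcomp⟩, hmax⟩
  refine ⟨hEadm.1, ?_⟩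
  intro b hb
  by_contra h
  push_neg at h
  -- E ∪ {b} is admissible
  have hins : admissible D (insert b E) := by
    constructor
    · rintro x (rfl | hx) y (rfl | hy)
      · exact hirr _
      · intro hxy; exact h y hy (hsymm _ _ hxy)
      · exact h x hx
      · exact hEadm.1 x hx y hy
    · rintro z (rfl | hz) c hc
      · exact ⟨z, Or.inl rfl, hsymm _ _ hc⟩
      · obtain ⟨d, hd, hdc⟩ := hEadm.2 z hz c hc
        exact ⟨d, Or.inr hd, hdc⟩
  -- take a maximal admissible superset of insert b E
  set S : Set (Set A) := {T | admissible D T ∧ insert b E ⊆ T}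
  have hfin : S.Finite := Set.Finite.subset (Set.finite_univ) (Set.subset_univ _)
  have hne : S.Nonempty := ⟨insert b E, hins, subset_rfl⟩
  obtain ⟨T, ⟨hTadm, hTsub⟩, hTmax⟩ :=
    Set.Finite.exists_maximalFor id S hfin hne
  -- T is complete
  have hTcomp : complete D T := by
    refine ⟨hTadm, ?_⟩
    intro a ha
    by_contra haT
    have : insert a T ∈ S :=
      ⟨admissible_insert hsymm hirr hTadm ha, hTsub.trans (Set.subset_insert _ _)⟩
    have heq := hTmax this (Set.subset_insert _ _)
    simp only [id_eq] at heq
    exact haT (heq (Set.mem_insert a T))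
  have hES : E ⊆ T := fun x hx => hTsub (Or.inr hx)
  have := hmax T hTcomp hES
  exact hb (this ▸ hTsub (Or.inl rfl))
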